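/- For every periodic operator A and every integer k ≥ 1, lim_{n→∞} 2^{−n}·Tr(((A_n)ᴴ A_n)^k) = t((A*A)^k), where (A_n)ᴴ is the conjugate transpose of the matrix A_n and (A*A)^k is computed in the algebra of periodic operators. -/

import Mathlib

open Filter Topology Matrix

/-- A *periodic operator* is a function `A : ℤ × ℤ → ℂ` such that for some `n ≥ 1`,
`A(x,y) = 0` whenever `|x−y| > 2^n` and `A(x+2^n, y+2^n) = A(x,y)` for all `x, y ∈ ℤ`. -/
def IsPeriodicOp (A : ℤ → ℤ → ℂ) : Prop :=
  ∃ n : ℕ, 1 ≤ n ∧ (∀ x y : ℤ, |x - y| > 2 ^ n → A x y = 0) ∧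
    (∀ x y : ℤ, A (x + 2 ^ n) (y + 2 ^ n) = A x y)

/-- The product `(AB)(x,y) = ∑_z A(x,z)·B(z,y)` (a finite sum for periodic operators). -/
noncomputable def opMul (A B : ℤ → ℤ → ℂ) : ℤ → ℤ → ℂ := fun x y => ∑ᶠ z : ℤ, A x z * B z y

/-- The adjoint `A*(x,y) = conj (A(y,x))`. -/
def opAdj (A : ℤ → ℤ → ℂ) : ℤ → ℤ → ℂ := fun x y => starRingEnd ℂ (A y x)

/-- The identity operator `1(x,y) = δ_{x,y}`. -/
def opOne : ℤ → ℤ → ℂ := fun x y => if x = y then 1 else 0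

/-- Powers in the algebra of periodic operators. -/
noncomputable def opPow (A : ℤ → ℤ → ℂ) : ℕ → (ℤ → ℤ → ℂ)
  | 0 => opOne
  | k + 1 => opMul (opPow A k) A

/-- The truncation `A_n`, viewed as the `2^n × 2^n` matrix `(A(x,y))_{0 ≤ x,y ≤ 2^n−1}`. -/
noncomputable def trunc (A : ℤ → ℤ → ℂ) (n : ℕ) : Matrix (Fin (2 ^ n)) (Fin (2 ^ n)) ℂ :=
  fun i j => A ((i : ℕ) : ℤ) ((j : ℕ) : ℤ)

/-- The candidate value `t(B) = 2^{−n} ∑_{i=0}^{2^n−1} B(i,i)` computed with a given `n`. -/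
noncomputable def opTraceAt (B : ℤ → ℤ → ℂ) (n : ℕ) : ℂ :=
  (∑ i : Fin (2 ^ n), B ((i : ℕ) : ℤ) ((i : ℕ) : ℤ)) / 2 ^ n

/-! ### Auxiliary lemmas -/

section Aux

lemma finsum_eq_fin_sum (h : ℤ → ℂ) (N : ℕ)
    (hs : ∀ z : ℤ, h z ≠ 0 → 0 ≤ z ∧ z < N) :
    ∑ᶠ z : ℤ, h z = ∑ z : Fin N, h ((z : ℕ) : ℤ) := by
  have h1 : ∑ᶠ z : ℤ, h z = ∑ z ∈ (Finset.range N).image (Nat.cast : ℕ → ℤ), h z := by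
    apply finsum_eq_sum_of_support_subset
    intro z hz
    rcases hs z hz with ⟨h0, hN⟩
    refine Finset.mem_coe.mpr (Finset.mem_image.mpr ⟨z.toNat, Finset.mem_range.mpr (by omega), by omega⟩)
  rw [h1, Finset.sum_image (by intro a _ b _ hab; exact_mod_cast hab),
    ← Fin.sum_univ_eq_sum_range (fun i => h (i : ℤ)) N]

lemma card_filter_le_icc {N : ℕ} (p : Fin N → Prop) [DecidablePred p] (a b : ℤ)
    (hp : ∀ w : Fin N, p w → a ≤ ((w : ℕ) : ℤ) ∧ ((w : ℕ) : ℤ) ≤ b) :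
    (Finset.univ.filter p).card ≤ (b + 1 - a).toNat := by
  have := Finset.card_le_card_of_injOn (s := Finset.univ.filter p) (t := Finset.Icc a b)
    (fun w : Fin N => ((w : ℕ) : ℤ))
    (fun w hw => by
      rcases hp w (Finset.mem_filter.mp hw).2 with ⟨h1, h2⟩
      exact Finset.mem_Icc.mpr ⟨h1, h2⟩)
    (fun w _ w' _ hww => by
      apply Fin.ext
      have h' : ((w : ℕ) : ℤ) = ((w' : ℕ) : ℤ) := hww
      exact_mod_cast h')
  simpa [Int.card_Icc] using this

lemma fin_sum_bound {N : ℕ} (h : Fin N → ℂ) (x r : ℤ) (c : ℝ) (hr : 0 ≤ r) (hc : 0 ≤ c)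
    (hsupp : ∀ w : Fin N, h w ≠ 0 → |((w : ℕ) : ℤ) - x| ≤ r)
    (hb : ∀ w, ‖h w‖ ≤ c) :
    ‖∑ w, h w‖ ≤ (2 * r + 1) * c := by
  classical
  rw [← Finset.sum_filter_ne_zero]
  set s := Finset.univ.filter (fun w => h w ≠ 0) with hsdef
  have h2 : s.card ≤ (2 * r + 1).toNat := by
    have := card_filter_le_icc (fun w => h w ≠ 0) (x - r) (x + r)
      (fun w hw => by have := hsupp w hw; rw [abs_le] at this; constructor <;> omega)
    simpa [show x + r + 1 - (x - r) = 2 * r + 1 by ring] using this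
  calc ‖∑ w ∈ s, h w‖ ≤ ∑ w ∈ s, ‖h w‖ := norm_sum_le _ _
    _ ≤ s.card • c := Finset.sum_le_card_nsmul _ _ _ (fun w _ => hb w)
    _ = (s.card : ℝ) * c := by simp [nsmul_eq_mul]
    _ ≤ ((2 * r + 1).toNat : ℝ) * c := by
        apply mul_le_mul_of_nonneg_right _ hc; exact_mod_cast h2
    _ = (2 * r + 1) * c := by
        have hc2 : (((2 * r + 1).toNat : ℕ) : ℝ) = 2 * (r : ℝ) + 1 := by
          exact_mod_cast Int.toNat_of_nonneg (show (0:ℤ) ≤ 2 * r + 1 by omega)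
        rw [hc2]

lemma int_finsum_bound (h : ℤ → ℂ) (x r : ℤ) (c : ℝ) (hr : 0 ≤ r) (hc : 0 ≤ c)
    (hsupp : ∀ w, h w ≠ 0 → |w - x| ≤ r) (hb : ∀ w, ‖h w‖ ≤ c) :
    ‖∑ᶠ w, h w‖ ≤ (2 * r + 1) * c := by
  have h1 : ∑ᶠ w, h w = ∑ w ∈ Finset.Icc (x - r) (x + r), h w := by
    apply finsum_eq_sum_of_support_subset
    intro w hw
    have := hsupp w hw
    rw [abs_le] at this
    exact Finset.mem_coe.mpr (Finset.mem_Icc.mpr (by constructor <;> omega))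
  rw [h1]
  calc ‖∑ w ∈ Finset.Icc (x-r) (x+r), h w‖ ≤ ∑ w ∈ Finset.Icc (x-r) (x+r), ‖h w‖ := norm_sum_le _ _
    _ ≤ (Finset.Icc (x-r) (x+r)).card • c := Finset.sum_le_card_nsmul _ _ _ (fun w _ => hb w)
    _ = (((x + r + 1 - (x - r)).toNat : ℝ)) * c := by simp [Int.card_Icc, nsmul_eq_mul]
    _ = (2 * r + 1) * c := by
        rw [show x + r + 1 - (x - r) = 2 * r + 1 by ring]
        have hc2 : (((2 * r + 1).toNat : ℕ) : ℝ) = 2 * (r : ℝ) + 1 := by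
          exact_mod_cast Int.toNat_of_nonneg (show (0:ℤ) ≤ 2 * r + 1 by omega)
        rw [hc2]

/-! ### The `OpGood` predicate -/

def OpGood (P r : ℤ) (C : ℝ) (f : ℤ → ℤ → ℂ) : Prop :=
  (∀ x y : ℤ, |x - y| > r → f x y = 0) ∧
  (∀ x y : ℤ, f (x + P) (y + P) = f x y) ∧
  (∀ x y : ℤ, ‖f x y‖ ≤ C)

lemma OpGood.mul {P r₁ r₂ : ℤ} {C₁ C₂ : ℝ} {f g : ℤ → ℤ → ℂ}
    (hf : OpGood P r₁ C₁ f) (hg : OpGood P r₂ C₂ g)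
    (hr₁ : 0 ≤ r₁) (hr₂ : 0 ≤ r₂) (hC₁ : 0 ≤ C₁) (hC₂ : 0 ≤ C₂) :
    OpGood P (r₁ + r₂) ((2 * r₁ + 1) * (C₁ * C₂)) (opMul f g) := by
  obtain ⟨hfb, hfp, hfn⟩ := hf
  obtain ⟨hgb, hgp, hgn⟩ := hg
  refine ⟨?_, ?_, ?_⟩
  · intro x y hxy
    apply finsum_eq_zero_of_forall_eq_zero
    intro z
    by_cases h1 : |x - z| > r₁
    · rw [hfb x z h1, zero_mul]
    · rw [hgb z y (by
        push_neg at h1; rw [abs_le] at h1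
        rcases abs_cases (x - y) with ⟨h2, h3⟩ | ⟨h2, h3⟩ <;>
          rcases abs_cases (z - y) with ⟨h4, h5⟩ | ⟨h4, h5⟩ <;> omega), mul_zero]
  · intro x y
    show (∑ᶠ z, f (x + P) z * g z (y + P)) = ∑ᶠ z, f x z * g z y
    have := finsum_comp_equiv (Equiv.addRight P) (f := fun z => f (x + P) z * g z (y + P))
    rw [← this]
    apply finsum_congr
    intro z
    show f (x + P) (z + P) * g (z + P) (y + P) = _
    rw [hfp, hgp]
  · intro x y
    apply int_finsum_bound _ x r₁ _ hr₁ (by positivity)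
    · intro w hw
      have h1 : f x w ≠ 0 := fun h => hw (by rw [h, zero_mul])
      have := hfb x w
      rw [abs_sub_comm]
      by_contra hcon; push_neg at hcon; exact h1 (this hcon)
    · intro w
      rw [norm_mul]
      exact mul_le_mul (hfn x w) (hgn w y) (norm_nonneg _) hC₁

lemma opOne_good (P : ℤ) : OpGood P 0 1 opOne := by
  refine ⟨fun x y h => ?_, fun x y => ?_, fun x y => ?_⟩
  · simp only [opOne, if_neg (show ¬ x = y by intro he; rw [he] at h; simp at h)]
  · simp only [opOne, add_left_inj]
  · simp only [opOne]; split <;> simp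

lemma opPow_good {P rB : ℤ} {CB : ℝ} {B : ℤ → ℤ → ℂ} (hrB : 0 ≤ rB) (hCB : 0 ≤ CB)
    (hB : OpGood P rB CB B) :
    ∀ k : ℕ, ∃ C : ℝ, 0 ≤ C ∧ OpGood P (rB * k) C (opPow B k) := by
  intro k
  induction k with
  | zero => exact ⟨1, zero_le_one, by simpa [opPow] using opOne_good P⟩
  | succ k ih =>
    obtain ⟨C, hC, hg⟩ := ih
    refine ⟨(2 * (rB * k) + 1) * (C * CB), by positivity, ?_⟩
    have := hg.mul hB (by positivity) hrB hC hCB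
    simpa [mul_add, mul_one, opPow] using this

/-! ### Boundedness of a periodic operator -/

lemma periodic_shift {A : ℤ → ℤ → ℂ} {P : ℤ}
    (hper : ∀ x y : ℤ, A (x + P) (y + P) = A x y) :
    ∀ t x y : ℤ, A (x + t * P) (y + t * P) = A x y := by
  intro t
  induction t using Int.induction_on with
  | zero => simp
  | succ t ih =>
    intro x y
    have : ∀ u : ℤ, u + (t + 1 : ℤ) * P = (u + t * P) + P := by intro u; ring
    rw [this x, this y, hper, ih]
  | pred t ih =>
    intro x y
    have h1 : ∀ u : ℤ, u + (-t : ℤ) * P = (u + (-t - 1) * P) + P := by intro u; ring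
    have := ih x y
    rw [h1 x, h1 y, hper] at this
    rw [this]

lemma exists_good (A : ℤ → ℤ → ℂ) (hA : IsPeriodicOp A) :
    ∃ (m : ℕ) (M : ℝ), 1 ≤ m ∧ 0 ≤ M ∧ OpGood (2 ^ m) (2 ^ m) M A := by
  obtain ⟨m, hm1, hband, hper⟩ := hA
  set P : ℤ := 2 ^ m with hP
  have hP1 : 1 ≤ P := one_le_pow₀ (by norm_num)
  set S : Finset (ℤ × ℤ) := Finset.Icc 0 (P - 1) ×ˢ Finset.Icc (-P) (2 * P) with hS
  have hne : S.Nonempty := ⟨(0, 0), by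
    simp only [hS, Finset.mem_product, Finset.mem_Icc]; omega⟩
  set M : ℝ := S.sup' hne (fun p => ‖A p.1 p.2‖) with hM
  have hM0 : 0 ≤ M := le_trans (norm_nonneg (A 0 0))
    (Finset.le_sup' (f := fun p : ℤ × ℤ => ‖A p.1 p.2‖) (b := ((0 : ℤ), (0 : ℤ)))
      (by simp only [hS, Finset.mem_product, Finset.mem_Icc]; omega))
  refine ⟨m, M, hm1, hM0, hband, hper, ?_⟩
  intro x y
  by_cases hb : |x - y| > P
  · rw [hband x y hb, norm_zero]; exact hM0
  · push_neg at hb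
    rw [abs_le] at hb
    set t : ℤ := -(x / P) with ht
    have hmod := Int.emod_def x P
    have hx' : x + t * P = x % P := by rw [hmod]; ring
    have h0 : 0 ≤ x % P := Int.emod_nonneg x (by omega)
    have hlt : x % P < P := Int.emod_lt_of_pos x (by omega)
    have heq : A (x % P) (y + t * P) = A x y := by
      rw [← hx']; exact periodic_shift hper t x y
    rw [← heq]
    apply Finset.le_sup' (f := fun p : ℤ × ℤ => ‖A p.1 p.2‖) (b := (x % P, y + t * P))
    simp only [hS, Finset.mem_product, Finset.mem_Icc]
    have : (x % P) - (y + t * P) = x - y := by rw [← hx']; ring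
    omega

/-! ### Matrix-side lemmas -/

lemma cast_pow_eq (n : ℕ) : ((2 ^ n : ℕ) : ℤ) = (2 : ℤ) ^ n := by push_cast; ring

lemma matE_apply (A : ℤ → ℤ → ℂ) (n : ℕ) (z j : Fin (2 ^ n)) :
    ((trunc A n)ᴴ * trunc A n) z j
      = ∑ w : Fin (2 ^ n), (starRingEnd ℂ) (A ((w : ℕ) : ℤ) ((z : ℕ) : ℤ)) * A ((w : ℕ) : ℤ) ((j : ℕ) : ℤ) := by
  rw [Matrix.mul_apply]
  apply Finset.sum_congr rfl
  intro w _
  rw [Matrix.conjTranspose_apply, trunc]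
  rfl

lemma abs_band_step {a b c r s : ℤ} (h : |a - c| > r + s) (h1 : |b - a| ≤ r) : |b - c| > s := by
  rcases abs_cases (a - c) with ⟨h2, h3⟩ | ⟨h2, h3⟩ <;>
    rcases abs_cases (b - c) with ⟨h4, h5⟩ | ⟨h4, h5⟩ <;>
      rcases abs_cases (b - a) with ⟨h6, h7⟩ | ⟨h6, h7⟩ <;> omega

section MatSide

variable {A : ℤ → ℤ → ℂ} {P : ℤ} {M : ℝ}

lemma matE_band (hband : ∀ x y : ℤ, |x - y| > P → A x y = 0)
    (n : ℕ) (z j : Fin (2 ^ n)) (h : |((z : ℕ) : ℤ) - ((j : ℕ) : ℤ)| > 2 * P) :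
    ((trunc A n)ᴴ * trunc A n) z j = 0 := by
  rw [matE_apply]
  apply Finset.sum_eq_zero
  intro w _
  by_cases h1 : |((w : ℕ) : ℤ) - ((z : ℕ) : ℤ)| > P
  · rw [hband _ _ h1, map_zero, zero_mul]
  · push_neg at h1
    rw [hband ((w : ℕ) : ℤ) ((j : ℕ) : ℤ)
      (abs_band_step (by rw [show 2 * P = P + P by ring] at h; exact h) h1), mul_zero]

lemma matE_bound (hP : 0 ≤ P) (hM : 0 ≤ M) (hb : ∀ x y : ℤ, ‖A x y‖ ≤ M)
    (hband : ∀ x y : ℤ, |x - y| > P → A x y = 0)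
    (n : ℕ) (z j : Fin (2 ^ n)) :
    ‖((trunc A n)ᴴ * trunc A n) z j‖ ≤ (2 * P + 1) * (M * M) := by
  rw [matE_apply]
  apply fin_sum_bound _ ((z : ℕ) : ℤ) P _ hP (by positivity)
  · intro w hw
    have h1 : A ((w : ℕ) : ℤ) ((z : ℕ) : ℤ) ≠ 0 := by
      intro h0; rw [h0, map_zero, zero_mul] at hw; exact hw rfl
    by_contra hcon; push_neg at hcon
    exact h1 (hband _ _ hcon)
  · intro w
    rw [norm_mul, RingHomIsometric.norm_map]
    exact mul_le_mul (hb _ _) (hb _ _) (norm_nonneg _) hM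

lemma mat_pow_good (hP : 0 ≤ P) (hM : 0 ≤ M) (hb : ∀ x y : ℤ, ‖A x y‖ ≤ M)
    (hband : ∀ x y : ℤ, |x - y| > P → A x y = 0) :
    ∀ k : ℕ, ∃ C : ℝ, 0 ≤ C ∧ ∀ (n : ℕ) (i j : Fin (2 ^ n)),
      (|((i : ℕ) : ℤ) - ((j : ℕ) : ℤ)| > 2 * P * k → (((trunc A n)ᴴ * trunc A n) ^ k) i j = 0) ∧
      ‖(((trunc A n)ᴴ * trunc A n) ^ k) i j‖ ≤ C := by
  intro k
  induction k with
  | zero =>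
    refine ⟨1, zero_le_one, fun n i j => ⟨fun h => ?_, ?_⟩⟩
    · rw [pow_zero, Matrix.one_apply_ne]
      intro he
      rw [he] at h
      simp at h
    · rw [pow_zero, Matrix.one_apply]
      split <;> simp
  | succ k ih =>
    obtain ⟨C, hC, hCprop⟩ := ih
    refine ⟨(2 * (2 * P * k) + 1) * (C * ((2 * P + 1) * (M * M))), by positivity, fun n i j => ?_⟩
    constructor
    · intro h
      rw [pow_succ, Matrix.mul_apply]
      apply Finset.sum_eq_zero
      intro z _
      by_cases h1 : |((i : ℕ) : ℤ) - ((z : ℕ) : ℤ)| > 2 * P * k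
      · rw [(hCprop n i z).1 h1, zero_mul]
      · push_neg at h1
        rw [abs_sub_comm] at h1
        rw [matE_band hband n z j (abs_band_step
          (by rw [show 2 * P * (k + 1 : ℕ) = 2 * P * k + 2 * P by push_cast; ring] at h; exact h)
          h1), mul_zero]
    · rw [pow_succ, Matrix.mul_apply]
      refine le_trans (fin_sum_bound
        (fun z : Fin (2 ^ n) => (((trunc A n)ᴴ * trunc A n) ^ k) i z * ((trunc A n)ᴴ * trunc A n) z j)
        ((i : ℕ) : ℤ) (2 * P * k) (C * ((2 * P + 1) * (M * M))) (by positivity) (by positivity)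
        ?_ ?_) (le_of_eq (by push_cast; ring))
      · intro z hz
        by_contra hcon; push_neg at hcon
        rw [abs_sub_comm] at hcon
        exact hz (by show _ * _ = (0:ℂ); rw [(hCprop n i z).1 hcon, zero_mul])
      · intro z
        show ‖_ * _‖ ≤ _
        rw [norm_mul]
        exact mul_le_mul (hCprop n i z).2 (matE_bound hP hM hb hband n z j)
          (norm_nonneg _) hC

end MatSide

section Entry

variable {A : ℤ → ℤ → ℂ} {P : ℤ}

lemma base_entry (hband : ∀ x y : ℤ, |x - y| > P → A x y = 0)
    (n : ℕ) (z j : Fin (2 ^ n)) (h1 : P ≤ ((z : ℕ) : ℤ)) (h2 : ((z : ℕ) : ℤ) + P < 2 ^ n) :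
    ((trunc A n)ᴴ * trunc A n) z j = opMul (opAdj A) A ((z : ℕ) : ℤ) ((j : ℕ) : ℤ) := by
  rw [matE_apply]
  show _ = ∑ᶠ w : ℤ, opAdj A ((z : ℕ) : ℤ) w * A w ((j : ℕ) : ℤ)
  rw [finsum_eq_fin_sum (fun w => opAdj A ((z : ℕ) : ℤ) w * A w ((j : ℕ) : ℤ)) (2 ^ n) ?_]
  · rfl
  · intro w hw
    have hA : A w ((z : ℕ) : ℤ) ≠ 0 := by
      intro h0
      apply hw
      show opAdj A _ w * _ = 0
      rw [opAdj, h0, map_zero, zero_mul]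
    have habs : |w - ((z : ℕ) : ℤ)| ≤ P := by
      by_contra hcon; push_neg at hcon; exact hA (hband _ _ hcon)
    rw [abs_le] at habs
    rw [cast_pow_eq]
    omega

lemma entry_eq (hP : 1 ≤ P) (hband : ∀ x y : ℤ, |x - y| > P → A x y = 0)
    (hBk : ∀ (k : ℕ) (x y : ℤ), |x - y| > 2 * P * k → opPow (opMul (opAdj A) A) k x y = 0)
    (hMat : ∀ (k : ℕ) (n : ℕ) (i j : Fin (2 ^ n)), |((i : ℕ) : ℤ) - ((j : ℕ) : ℤ)| > 2 * P * k →
      (((trunc A n)ᴴ * trunc A n) ^ k) i j = 0) :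
    ∀ (k : ℕ) (n : ℕ) (i j : Fin (2 ^ n)), 2 * P * k ≤ ((i : ℕ) : ℤ) →
      ((i : ℕ) : ℤ) + 2 * P * k < 2 ^ n →
      (((trunc A n)ᴴ * trunc A n) ^ k) i j
        = opPow (opMul (opAdj A) A) k ((i : ℕ) : ℤ) ((j : ℕ) : ℤ) := by
  intro k
  induction k with
  | zero =>
    intro n i j _ _
    rw [pow_zero, Matrix.one_apply]
    show _ = opOne _ _
    rw [opOne]
    by_cases he : i = j
    · rw [if_pos he, if_pos (by rw [he])]
    · rw [if_neg he, if_neg (fun hc => he (Fin.ext (by exact_mod_cast hc)))]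
  | succ k ih =>
    intro n i j hi1 hi2
    have hq0 : (0 : ℤ) ≤ 2 * P * k := by positivity
    have hcast : (2 : ℤ) * P * ((k : ℕ) + 1 : ℕ) = 2 * P * k + 2 * P := by push_cast; ring
    rw [hcast] at hi1 hi2
    rw [pow_succ, Matrix.mul_apply]
    have hterm : ∀ z : Fin (2 ^ n),
        (((trunc A n)ᴴ * trunc A n) ^ k) i z * ((trunc A n)ᴴ * trunc A n) z j
          = opPow (opMul (opAdj A) A) k ((i : ℕ) : ℤ) ((z : ℕ) : ℤ)
            * opMul (opAdj A) A ((z : ℕ) : ℤ) ((j : ℕ) : ℤ) := by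
      intro z
      by_cases hz : |((i : ℕ) : ℤ) - ((z : ℕ) : ℤ)| ≤ 2 * P * k
      · have hz' := hz
        rw [abs_le] at hz'
        rw [ih n i z (by omega) (by omega),
          base_entry hband n z j (by omega) (by omega)]
      · push_neg at hz
        rw [hMat k n i z hz, hBk k _ _ hz, zero_mul, zero_mul]
    rw [Finset.sum_congr rfl (fun z _ => hterm z)]
    show _ = opMul (opPow (opMul (opAdj A) A) k) (opMul (opAdj A) A) _ _
    rw [opMul]
    rw [finsum_eq_fin_sum
      (fun z => opPow (opMul (opAdj A) A) k ((i : ℕ) : ℤ) z * opMul (opAdj A) A z ((j : ℕ) : ℤ))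
      (2 ^ n) ?_]
    · intro w hw
      have h1 : opPow (opMul (opAdj A) A) k ((i : ℕ) : ℤ) w ≠ 0 := by
        intro h0; apply hw; show _ * _ = 0; rw [h0, zero_mul]
      have habs : |((i : ℕ) : ℤ) - w| ≤ 2 * P * k := by
        by_contra hcon; push_neg at hcon; exact h1 (hBk k _ _ hcon)
      rw [abs_le] at habs
      rw [cast_pow_eq]
      omega

end Entry

/-! ### Averaging lemmas -/

lemma period_pow {g : ℤ → ℂ} {a : ℕ} (hg : ∀ x, g (x + 2 ^ a) = g x) :
    ∀ b, a ≤ b → ∀ x, g (x + 2 ^ b) = g x := by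
  intro b hb
  induction b, hb using Nat.le_induction with
  | base => exact hg
  | succ b hb ih =>
    intro x
    have h2 : (2 : ℤ) ^ (b + 1) = 2 ^ b + 2 ^ b := by rw [pow_succ]; ring
    rw [h2, ← add_assoc, ih, ih]

lemma avg_eq {g : ℤ → ℂ} {a : ℕ} (hg : ∀ x, g (x + 2 ^ a) = g x) :
    ∀ b, a ≤ b →
      (∑ i : Fin (2 ^ b), g ((i : ℕ) : ℤ)) / 2 ^ b
        = (∑ i : Fin (2 ^ a), g ((i : ℕ) : ℤ)) / 2 ^ a := by
  intro b hb
  induction b, hb using Nat.le_induction with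
  | base => rfl
  | succ b hb ih =>
    rw [← ih]
    rw [Fin.sum_univ_eq_sum_range (fun i => g (i : ℤ)) (2 ^ (b + 1)),
      Fin.sum_univ_eq_sum_range (fun i => g (i : ℤ)) (2 ^ b)]
    have h2 : (2 : ℕ) ^ (b + 1) = 2 ^ b + 2 ^ b := by rw [pow_succ]; ring
    rw [h2, Finset.sum_range_add]
    have hgi : ∀ i : ℕ, g ((2 ^ b + i : ℕ) : ℤ) = g (i : ℤ) := by
      intro i
      have hc : ((2 ^ b + i : ℕ) : ℤ) = (i : ℤ) + 2 ^ b := by push_cast; ring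
      rw [hc, period_pow hg b hb]
    rw [Finset.sum_congr rfl (fun i _ => hgi i)]
    have hne : (2 : ℂ) ^ b ≠ 0 := pow_ne_zero _ two_ne_zero
    have hne2 : (2 : ℂ) ^ (b + 1) ≠ 0 := pow_ne_zero _ two_ne_zero
    field_simp
    ring

/-! ### Main theorem -/

/-- for every periodic operator `A` and every `k ≥ 1`,
`lim_n 2^{−n}·Tr(((A_n)ᴴ A_n)^k) = t((A*A)^k)`, where `t(B) = 2^{−n₀} ∑_{i<2^n₀} B(i,i)`
for any `n₀` such that `2^{n₀}` is a period of `B` (the value is independent of the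
choice of such `n₀`). -/
theorem stmt15 (A : ℤ → ℤ → ℂ) (hA : IsPeriodicOp A) (k : ℕ) (hk : 1 ≤ k) :
    ∃ c : ℂ,
      (∀ n₀ : ℕ, (∀ x y : ℤ, opPow (opMul (opAdj A) A) k (x + 2 ^ n₀) (y + 2 ^ n₀) =
          opPow (opMul (opAdj A) A) k x y) →
        opTraceAt (opPow (opMul (opAdj A) A) k) n₀ = c) ∧
      Filter.Tendsto
        (fun n : ℕ => Matrix.trace (((trunc A n)ᴴ * trunc A n) ^ k) / 2 ^ n)
        Filter.atTop (nhds c) := by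
  classical
  obtain ⟨m, M, hm1, hM0, hbandA, hperA, hbndA⟩ := exists_good A hA
  have hP1 : (1 : ℤ) ≤ 2 ^ m := one_le_pow₀ (by norm_num)
  have hP0 : (0 : ℤ) ≤ 2 ^ m := by omega
  have hadj : OpGood (2 ^ m) (2 ^ m) M (opAdj A) := by
    refine ⟨fun x y h => ?_, fun x y => ?_, fun x y => ?_⟩
    · show starRingEnd ℂ (A y x) = 0
      rw [hbandA y x (by rw [abs_sub_comm] at h; exact h), map_zero]
    · show starRingEnd ℂ (A (y + 2 ^m) (x + 2 ^ m)) = starRingEnd ℂ (A y x)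
      rw [hperA]
    · show ‖starRingEnd ℂ (A y x)‖ ≤ M
      rw [RingHomIsometric.norm_map]; exact hbndA y x
  have hBgood : OpGood (2 ^ m) (2 * 2 ^ m) ((2 * (((2 : ℤ) ^ m : ℤ) : ℝ) + 1) * (M * M))
      (opMul (opAdj A) A) := by
    have := hadj.mul ⟨hbandA, hperA, hbndA⟩ hP0 hP0 hM0 hM0
    rw [show (2 : ℤ) ^ m + 2 ^ m = 2 * 2 ^ m by ring] at this
    exact this
  have hpow := opPow_good (P := 2 ^ m) (by positivity) (by positivity) hBgood
  have hBkband : ∀ (k' : ℕ) (x y : ℤ), |x - y| > 2 * 2 ^ m * k' →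
      opPow (opMul (opAdj A) A) k' x y = 0 :=
    fun k' x y h => (hpow k').choose_spec.2.1 x y h
  have hmat := mat_pow_good hP0 hM0 hbndA hbandA
  have hMatband : ∀ (k' : ℕ) (n : ℕ) (i j : Fin (2 ^ n)),
      |((i : ℕ) : ℤ) - ((j : ℕ) : ℤ)| > 2 * 2 ^ m * k' →
      (((trunc A n)ᴴ * trunc A n) ^ k') i j = 0 :=
    fun k' n i j h => ((hmat k').choose_spec.2 n i j).1 h
  obtain ⟨CB, hCB0, hBkb, hBkp, hBkn⟩ := hpow k
  obtain ⟨CM, hCM0, hMk⟩ := hmat k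
  have hentry := entry_eq hP1 hbandA hBkband hMatband k
  set g : ℤ → ℂ := fun x => opPow (opMul (opAdj A) A) k x x with hgdef
  have hgper : ∀ x, g (x + 2 ^ m) = g x := fun x => hBkp x x
  refine ⟨opTraceAt (opPow (opMul (opAdj A) A) k) m, ?_, ?_⟩
  · intro n₀ hn₀
    have hgper₀ : ∀ x, g (x + 2 ^ n₀) = g x := fun x => hn₀ x x
    have e1 := avg_eq hgper (max m n₀) (le_max_left _ _)
    have e2 := avg_eq hgper₀ (max m n₀) (le_max_right _ _)
    exact e2.symm.trans e1
  · set D : ℤ := 2 * 2 ^ m * k with hDdef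
    have hD0 : (0 : ℤ) ≤ D := by positivity
    set K : ℝ := (CM + CB) * (2 * D.toNat) with hKdef
    have hK0 : 0 ≤ K := by positivity
    rw [tendsto_iff_norm_sub_tendsto_zero]
    have hlim : Filter.Tendsto (fun n : ℕ => K / 2 ^ n) Filter.atTop (nhds 0) := by
      have h12 : Filter.Tendsto (fun n : ℕ => ((1 : ℝ) / 2) ^ n) Filter.atTop (nhds 0) :=
        tendsto_pow_atTop_nhds_zero_of_lt_one (by norm_num) (by norm_num)
      have := h12.const_mul K
      simp only [mul_zero] at this
      convert this using 2 with n
      rw [div_pow, one_pow]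
      ring
    apply squeeze_zero' (Filter.Eventually.of_forall (fun n => norm_nonneg _)) ?_ hlim
    rw [Filter.eventually_atTop]
    refine ⟨m, fun n hn => ?_⟩
    have hc : opTraceAt (opPow (opMul (opAdj A) A) k) m
        = (∑ i : Fin (2 ^ n), g ((i : ℕ) : ℤ)) / 2 ^ n := (avg_eq hgper n hn).symm
    have htr : Matrix.trace (((trunc A n)ᴴ * trunc A n) ^ k)
        = ∑ i : Fin (2 ^ n), (((trunc A n)ᴴ * trunc A n) ^ k) i i := rfl
    have hdiff : Matrix.trace (((trunc A n)ᴴ * trunc A n) ^ k) / 2 ^ n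
        - opTraceAt (opPow (opMul (opAdj A) A) k) m
        = (∑ i : Fin (2 ^ n), ((((trunc A n)ᴴ * trunc A n) ^ k) i i - g ((i : ℕ) : ℤ))) / 2 ^ n := by
      rw [hc, htr, Finset.sum_sub_distrib, sub_div]
    rw [hdiff]
    have hnorm2 : ‖(2 : ℂ) ^ n‖ = (2 : ℝ) ^ n := by
      rw [norm_pow]; norm_num
    rw [norm_div, hnorm2]
    have hsum : ‖∑ i : Fin (2 ^ n), ((((trunc A n)ᴴ * trunc A n) ^ k) i i - g ((i : ℕ) : ℤ))‖ ≤ K := by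
      have hbound : ∀ i : Fin (2 ^ n),
          ‖(((trunc A n)ᴴ * trunc A n) ^ k) i i - g ((i : ℕ) : ℤ)‖
            ≤ (if D ≤ ((i : ℕ) : ℤ) ∧ ((i : ℕ) : ℤ) + D < 2 ^ n then 0 else CM + CB) := by
        intro i
        split_ifs with hcond
        · rw [hentry n i i hcond.1 hcond.2]
          simp [hgdef]
        · exact le_trans (norm_sub_le _ _) (add_le_add ((hMk n i i).2) (hBkn _ _))
      calc ‖∑ i : Fin (2 ^ n), ((((trunc A n)ᴴ * trunc A n) ^ k) i i - g ((i : ℕ) : ℤ))‖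
          ≤ ∑ i : Fin (2 ^ n), ‖(((trunc A n)ᴴ * trunc A n) ^ k) i i - g ((i : ℕ) : ℤ)‖ :=
            norm_sum_le _ _
        _ ≤ ∑ i : Fin (2 ^ n), (if D ≤ ((i : ℕ) : ℤ) ∧ ((i : ℕ) : ℤ) + D < 2 ^ n then 0 else CM + CB) :=
            Finset.sum_le_sum (fun i _ => hbound i)
        _ ≤ K := ?_
      rw [Finset.sum_ite, Finset.sum_const, Finset.sum_const]
      simp only [smul_zero, zero_add, nsmul_eq_mul]
      have hcard : (Finset.univ.filter (fun i : Fin (2 ^ n) =>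
          ¬(D ≤ ((i : ℕ) : ℤ) ∧ ((i : ℕ) : ℤ) + D < 2 ^ n))).card ≤ 2 * D.toNat := by
        have hsub : Finset.univ.filter (fun i : Fin (2 ^ n) =>
            ¬(D ≤ ((i : ℕ) : ℤ) ∧ ((i : ℕ) : ℤ) + D < 2 ^ n))
            ⊆ Finset.univ.filter (fun i : Fin (2 ^ n) => ((i : ℕ) : ℤ) < D)
              ∪ Finset.univ.filter (fun i : Fin (2 ^ n) => (2 : ℤ) ^ n ≤ ((i : ℕ) : ℤ) + D) := by
          intro i hi
          simp only [Finset.mem_filter, Finset.mem_union, Finset.mem_univ, true_and] at hi ⊢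
          omega
        refine le_trans (Finset.card_le_card hsub) (le_trans (Finset.card_union_le _ _) ?_)
        have h1 := card_filter_le_icc (fun i : Fin (2 ^ n) => ((i : ℕ) : ℤ) < D) 0 (D - 1)
          (fun w hw => ⟨Int.natCast_nonneg _, by omega⟩)
        have h2 := card_filter_le_icc (fun i : Fin (2 ^ n) => (2 : ℤ) ^ n ≤ ((i : ℕ) : ℤ) + D)
          (2 ^ n - D) (2 ^ n - 1)
          (fun w hw => by
            have hwlt : ((w : ℕ) : ℤ) < 2 ^ n := by
              have := w.isLt
              rw [← cast_pow_eq]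
              exact_mod_cast this
            constructor <;> omega)
        have he1 : (D - 1 + 1 - 0).toNat = D.toNat := by omega
        have he2 : ((2 : ℤ) ^ n - 1 + 1 - (2 ^ n - D)).toNat = D.toNat := by omega
        rw [he1] at h1
        rw [he2] at h2
        omega
      calc ((Finset.univ.filter (fun i : Fin (2 ^ n) =>
              ¬(D ≤ ((i : ℕ) : ℤ) ∧ ((i : ℕ) : ℤ) + D < 2 ^ n))).card : ℝ) * (CM + CB)
          ≤ ((2 * D.toNat : ℕ) : ℝ) * (CM + CB) := by
            apply mul_le_mul_of_nonneg_right _ (by positivity)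
            exact_mod_cast hcard
        _ = K := by rw [hKdef]; push_cast; ring
    exact (div_le_div_iff_of_pos_right (by positivity)).mpr hsum
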